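/- Suppose 2^{k_β} ≥ 2eds for some s ≥ k. Then for every marked variable v ∈ M, every partial assignment X' ∈ {0,1}^{M\{v}} of the other marked variables, and every value c ∈ {0,1}, the conditional marginal satisfies μ_v(c | X') ≤ (1/2)·exp(1/s). -/

import Mathlib

open Finset

/-- A clause over variable set `V`. -/
structure Clause (V : Type) where
  vars : Finset V
  sign : V → Bool

/-- A clause is satisfied by an assignment iff some variable of the clause is
assigned the polarity of its literal. -/
def Clause.sat {V : Type} (c : Clause V) (X : V → Bool) : Prop :=
  ∃ v ∈ c.vars, X v = c.sign v

instance {V : Type} (c : Clause V) (X : V → Bool) : Decidable (c.sat X) :=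
  inferInstanceAs (Decidable (∃ v ∈ c.vars, X v = c.sign v))

/-- The set of satisfying assignments of the CNF formula whose clauses are the `cl i`. -/
def satSet {V ι : Type} [Fintype V] [DecidableEq V] [Fintype ι]
    (cl : ι → Clause V) : Finset (V → Bool) :=
  Finset.univ.filter fun X => ∀ i, (cl i).sat X

/-- The marginal probability `μ_M(σ)` that a uniformly random satisfying assignment
agrees with `σ` on the marked set `M`. -/
noncomputable def muM {V ι : Type} [Fintype V] [DecidableEq V] [Fintype ι]
    (cl : ι → Clause V) (M : Finset V) (σ : {v // v ∈ M} → Bool) : ℝ :=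
  (((satSet cl).filter fun X => ∀ v : {v // v ∈ M}, X v.1 = σ v).card : ℝ) /
    ((satSet cl).card : ℝ)

/-- The satisfying assignments agreeing with `σ` on `M \ {v}`. -/
def condSet {V ι : Type} [Fintype V] [DecidableEq V] [Fintype ι]
    (cl : ι → Clause V) (M : Finset V) (σ : {v // v ∈ M} → Bool)
    (v : {v // v ∈ M}) : Finset (V → Bool) :=
  (satSet cl).filter fun X => ∀ u : {v // v ∈ M}, u ≠ v → X u.1 = σ u

/-- The conditional marginal probability `μ_v(b | σ(M \ {v}))` that, conditioned on a
uniformly random satisfying assignment agreeing with `σ` on `M \ {v}`, the variable `v`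
takes the value `b`. -/
noncomputable def margin {V ι : Type} [Fintype V] [DecidableEq V] [Fintype ι]
    (cl : ι → Clause V) (M : Finset V) (σ : {v // v ∈ M} → Bool)
    (v : {v // v ∈ M}) (b : Bool) : ℝ :=
  (((condSet cl M σ v).filter fun X => X v.1 = b).card : ℝ) /
    ((condSet cl M σ v).card : ℝ)

/-- The transition matrix of the (idealized) Glauber dynamics on assignments of the
marked variables `M`: pick `v ∈ M` uniformly at random, keep the values on `M \ {v}`,
and resample the value at `v` from the conditional marginal `μ_v(· | σ(M \ {v}))`. -/
noncomputable def glauber {V ι : Type} [Fintype V] [DecidableEq V] [Fintype ι]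
    (cl : ι → Clause V) (M : Finset V) :
    Matrix ({v // v ∈ M} → Bool) ({v // v ∈ M} → Bool) ℝ :=
  fun σ τ => (1 / (M.card : ℝ)) *
    ∑ v : {v // v ∈ M},
      if ∀ u : {v // v ∈ M}, u ≠ v → τ u = σ u then margin cl M σ v (τ v) else 0

section CubeLemmas
variable {V : Type} [Fintype V] [DecidableEq V]



def cube (fixed : Finset V) (g : V → Bool) : Finset (V → Bool) :=
  Finset.univ.filter fun X => ∀ u ∈ fixed, X u = g u

lemma mem_cube {fixed : Finset V} {g : V → Bool} {X : V → Bool} :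
    X ∈ cube fixed g ↔ ∀ u ∈ fixed, X u = g u := by simp [cube]

/-- Forcing `t` free coordinates cuts the cube's size by exactly `2^t`. -/
lemma cube_forced (fixed : Finset V) (g : V → Bool) (T : Finset V) (hT : Disjoint T fixed)
    (f : V → Bool) :
    2 ^ T.card * ((cube fixed g).filter fun X => ∀ u ∈ T, X u = f u).card
      = (cube fixed g).card := by
  induction T using Finset.induction_on with
  | empty => simp
  | @insert a T ha ih =>
    have hT' : Disjoint T fixed := (Finset.disjoint_insert_left.mp hT).2
    have haf : a ∉ fixed := (Finset.disjoint_insert_left.mp hT).1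
    rw [← ih hT']
    have hsplit : ∀ c : Bool,
        (((cube fixed g).filter fun X => ∀ u ∈ T, X u = f u).filter fun X => X a = c).card
          = (((cube fixed g).filter fun X => ∀ u ∈ T, X u = f u).filter
              fun X => X a = !c).card := by
      intro c
      apply Finset.card_bij' (i := fun X _ => Function.update X a (!(X a)))
        (j := fun X _ => Function.update X a (!(X a)))
      case hi | hj =>
        intro X hX
        simp only [mem_filter, mem_cube] at hX ⊢
        obtain ⟨⟨hXΩ, hXT⟩, hXa⟩ := hX
        refine ⟨⟨fun u hu => ?_, fun u hu => ?_⟩, ?_⟩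
        · have hua : u ≠ a := fun h => haf (h ▸ hu)
          rw [Function.update_of_ne hua]; exact hXΩ u hu
        · have hua : u ≠ a := fun h => ha (h ▸ hu)
          rw [Function.update_of_ne hua]; exact hXT u hu
        · rw [Function.update_self, hXa]; try simp
      case left_inv | right_inv =>
        intro X _
        funext u
        by_cases h : u = a
        · subst h; simp
        · simp [Function.update_of_ne h]
    have hne : (((cube fixed g).filter fun X => ∀ u ∈ T, X u = f u).filter
          fun X => ¬ X a = f a).card
        = (((cube fixed g).filter fun X => ∀ u ∈ T, X u = f u).filter
          fun X => X a = !(f a)).card := by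
      congr 1
      apply Finset.filter_congr
      intro X _
      cases X a <;> cases f a <;> simp
    have hA : ((cube fixed g).filter fun X => ∀ u ∈ insert a T, X u = f u)
        = ((cube fixed g).filter fun X => ∀ u ∈ T, X u = f u).filter fun X => X a = f a := by
      rw [Finset.filter_filter]
      apply Finset.filter_congr
      intro X _
      simp only [Finset.forall_mem_insert]
      tauto
    have hsum := Finset.card_filter_add_card_filter_not
      (s := (cube fixed g).filter fun X => ∀ u ∈ T, X u = f u) (p := fun X => X a = f a)
    rw [hA, Finset.card_insert_of_notMem ha, pow_succ]
    have h2 : (((cube fixed g).filter fun X => ∀ u ∈ T, X u = f u)).card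
        = 2 * (((cube fixed g).filter fun X => ∀ u ∈ T, X u = f u).filter
            fun X => X a = f a).card := by
      rw [← hsum, hne, ← hsplit (f a)]
      ring
    rw [h2]
    ring

lemma cube_nonempty (fixed : Finset V) (g : V → Bool) : (cube fixed g).Nonempty :=
  ⟨g, by simp [cube]⟩

/-- Independence: events depending on disjoint variable sets have multiplying counts. -/
lemma cube_indep (fixed : Finset V) (g : V → Bool) (S T : Finset V) (hST : Disjoint S T)
    (P Q : (V → Bool) → Prop) [DecidablePred P] [DecidablePred Q]
    (hP : ∀ X ∈ cube fixed g, ∀ Y ∈ cube fixed g, (∀ u ∈ S, X u = Y u) → (P X ↔ P Y))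
    (hQ : ∀ X ∈ cube fixed g, ∀ Y ∈ cube fixed g, (∀ u ∈ T, X u = Y u) → (Q X ↔ Q Y)) :
    ((cube fixed g).filter fun X => P X ∧ Q X).card * (cube fixed g).card
      = ((cube fixed g).filter P).card * ((cube fixed g).filter Q).card := by
  set Ω := cube fixed g with hΩ
  have key : (((Ω.filter fun X => P X ∧ Q X) ×ˢ Ω)).card
      = ((Ω.filter P) ×ˢ (Ω.filter Q)).card := by
    have mem_comb : ∀ X ∈ Ω, ∀ Y ∈ Ω, (fun u => if u ∈ S then X u else Y u) ∈ Ω := by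
      intro X hX Y hY
      rw [mem_cube] at *
      intro u hu
      by_cases h : u ∈ S <;> simp [h, hX u hu, hY u hu]
    apply Finset.card_bij'
      (i := fun p _ => ((fun u => if u ∈ S then p.1 u else p.2 u),
                        (fun u => if u ∈ S then p.2 u else p.1 u)))
      (j := fun p _ => ((fun u => if u ∈ S then p.1 u else p.2 u),
                        (fun u => if u ∈ S then p.2 u else p.1 u)))
    case hi =>
      rintro ⟨X, Y⟩ h
      simp only [mem_product, mem_filter] at h ⊢
      obtain ⟨⟨hX, hPX, hQX⟩, hY⟩ := h
      refine ⟨⟨mem_comb X hX Y hY, ?_⟩, mem_comb Y hY X hX, ?_⟩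
      · exact (hP X hX _ (mem_comb X hX Y hY) (fun u hu => by simp [hu])).mp hPX
      · refine (hQ X hX _ (mem_comb Y hY X hX) (fun u hu => ?_)).mp hQX
        have : u ∉ S := fun hc => Finset.disjoint_left.mp hST hc hu
        simp [this]
    case hj =>
      rintro ⟨Z, W⟩ h
      simp only [mem_product, mem_filter] at h ⊢
      obtain ⟨⟨hZ, hPZ⟩, hW, hQW⟩ := h
      refine ⟨⟨mem_comb Z hZ W hW, ?_, ?_⟩, mem_comb W hW Z hZ⟩
      · exact (hP Z hZ _ (mem_comb Z hZ W hW) (fun u hu => by simp [hu])).mp hPZ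
      · refine (hQ W hW _ (mem_comb Z hZ W hW) (fun u hu => ?_)).mp hQW
        have : u ∉ S := fun hc => Finset.disjoint_left.mp hST hc hu
        simp [this]
    case left_inv =>
      rintro ⟨X, Y⟩ _
      refine Prod.ext ?_ ?_ <;> funext u <;> by_cases h : u ∈ S <;> simp [h]
    case right_inv =>
      rintro ⟨Z, W⟩ _
      refine Prod.ext ?_ ?_ <;> funext u <;> by_cases h : u ∈ S <;> simp [h]
  simpa [Finset.card_product] using key


end CubeLemmas
/-- Elements of the cube satisfying all clauses indexed by `S`. -/
def Nset {V ι : Type} [Fintype V] [DecidableEq V] [Fintype ι]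
    (fixed : Finset V) (g : V → Bool) (cl : ι → Clause V) (S : Finset ι) :
    Finset (V → Bool) :=
  (cube fixed g).filter fun X => ∀ j ∈ S, (cl j).sat X

section SatLayer
set_option linter.unusedSectionVars false
variable {V ι : Type} [Fintype V] [DecidableEq V] [Fintype ι] [DecidableEq ι]


lemma Nset_anti (fixed : Finset V) (g : V → Bool) (cl : ι → Clause V) {S S' : Finset ι}
    (h : S ⊆ S') : Nset fixed g cl S' ⊆ Nset fixed g cl S := by
  intro X hX
  simp only [Nset, mem_filter] at hX ⊢
  exact ⟨hX.1, fun j hj => hX.2 j (h hj)⟩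

lemma Nset_insert (fixed : Finset V) (g : V → Bool) (cl : ι → Clause V) (a : ι)
    (S : Finset ι) :
    Nset fixed g cl (insert a S) = (Nset fixed g cl S).filter fun X => (cl a).sat X := by
  ext X
  simp only [Nset, Finset.filter_filter, Finset.mem_filter, Finset.forall_mem_insert]
  tauto

/-- Within the cube, satisfaction of a clause depends only on its free variables. -/
lemma sat_depend (fixed : Finset V) (g : V → Bool) (c : Clause V) :
    ∀ X ∈ cube fixed g, ∀ Y ∈ cube fixed g,
      (∀ u ∈ c.vars \ fixed, X u = Y u) → (c.sat X ↔ c.sat Y) := by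
  have key : ∀ X ∈ cube fixed g, ∀ Y ∈ cube fixed g,
      (∀ u ∈ c.vars \ fixed, X u = Y u) → c.sat X → c.sat Y := by
    rintro X hX Y hY hagree ⟨u, hu, hXu⟩
    refine ⟨u, hu, ?_⟩
    by_cases hf : u ∈ fixed
    · rw [mem_cube] at hX hY
      rw [hY u hf, ← hX u hf, hXu]
    · rw [← hagree u (Finset.mem_sdiff.mpr ⟨hu, hf⟩), hXu]
  intro X hX Y hY hagree
  exact ⟨key X hX Y hY hagree, key Y hY X hX (fun u hu => (hagree u hu).symm)⟩

/-- Satisfying all clauses in `S` depends only on the free variables of those clauses. -/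
lemma satAll_depend (fixed : Finset V) (g : V → Bool) (cl : ι → Clause V) (S : Finset ι) :
    ∀ X ∈ cube fixed g, ∀ Y ∈ cube fixed g,
      (∀ u ∈ S.biUnion (fun j => (cl j).vars \ fixed), X u = Y u) →
      ((∀ j ∈ S, (cl j).sat X) ↔ (∀ j ∈ S, (cl j).sat Y)) := by
  intro X hX Y hY hagree
  have : ∀ j ∈ S, ((cl j).sat X ↔ (cl j).sat Y) := by
    intro j hj
    exact sat_depend fixed g (cl j) X hX Y hY
      (fun u hu => hagree u (Finset.mem_biUnion.mpr ⟨j, hj, hu⟩))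
  constructor <;> intro h j hj
  · exact (this j hj).mp (h j hj)
  · exact (this j hj).mpr (h j hj)

/-- Independence of a single clause's violation from clauses with disjoint free variables. -/
lemma Nset_bad_indep (fixed : Finset V) (g : V → Bool) (cl : ι → Clause V) (i : ι)
    (S : Finset ι)
    (hdisj : ∀ j ∈ S, Disjoint ((cl i).vars \ fixed) ((cl j).vars \ fixed)) :
    ((Nset fixed g cl S).filter fun X => ¬ (cl i).sat X).card * (cube fixed g).card
      = ((cube fixed g).filter fun X => ¬ (cl i).sat X).card
        * (Nset fixed g cl S).card := by
  have hST : Disjoint ((cl i).vars \ fixed) (S.biUnion fun j => (cl j).vars \ fixed) :=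
    (Finset.disjoint_biUnion_right _ _ _).mpr hdisj
  have hP : ∀ X ∈ cube fixed g, ∀ Y ∈ cube fixed g,
      (∀ u ∈ (cl i).vars \ fixed, X u = Y u) →
      ((¬ (cl i).sat X) ↔ (¬ (cl i).sat Y)) := by
    intro X hX Y hY hagree
    exact not_congr (sat_depend fixed g (cl i) X hX Y hY hagree)
  have := cube_indep fixed g ((cl i).vars \ fixed)
    (S.biUnion fun j => (cl j).vars \ fixed) hST
    (fun X => ¬ (cl i).sat X) (fun X => ∀ j ∈ S, (cl j).sat X)
    hP (satAll_depend fixed g cl S)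
  have hrw : ((cube fixed g).filter fun X => (¬ (cl i).sat X) ∧ ∀ j ∈ S, (cl j).sat X)
      = (Nset fixed g cl S).filter fun X => ¬ (cl i).sat X := by
    ext X
    simp only [Nset, Finset.filter_filter, Finset.mem_filter]
    tauto
  have hQN : (cube fixed g).filter (fun X => ∀ j ∈ S, (cl j).sat X) = Nset fixed g cl S := by
    ext X; simp [Nset]
  rw [hrw, hQN] at this
  exact this

/-- Conditional "fair coin" for a free variable not in any of the clauses of `S`. -/
lemma Nset_var_indep (fixed : Finset V) (g : V → Bool) (cl : ι → Clause V) (w : V)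
    (hw : w ∉ fixed) (b : Bool) (S : Finset ι) (hdisj : ∀ j ∈ S, w ∉ (cl j).vars) :
    2 * ((Nset fixed g cl S).filter fun X => X w = b).card
      = (Nset fixed g cl S).card := by
  have hST : Disjoint ({w} : Finset V) (S.biUnion fun j => (cl j).vars \ fixed) := by
    refine Finset.disjoint_left.mpr ?_
    intro u hu hub
    rw [Finset.mem_singleton] at hu
    obtain ⟨j, hj, huj⟩ := Finset.mem_biUnion.mp hub
    exact hdisj j hj (hu ▸ (Finset.mem_sdiff.mp huj).1)
  have hP : ∀ X ∈ cube fixed g, ∀ Y ∈ cube fixed g,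
      (∀ u ∈ ({w} : Finset V), X u = Y u) → ((X w = b) ↔ (Y w = b)) := by
    intro X _ Y _ hagree
    rw [hagree w (Finset.mem_singleton_self w)]
  have hind := cube_indep fixed g ({w} : Finset V)
    (S.biUnion fun j => (cl j).vars \ fixed) hST
    (fun X => X w = b) (fun X => ∀ j ∈ S, (cl j).sat X)
    hP (satAll_depend fixed g cl S)
  have hhalf : 2 * ((cube fixed g).filter fun X => X w = b).card = (cube fixed g).card := by
    have := cube_forced fixed g ({w} : Finset V)
      (Finset.disjoint_singleton_left.mpr hw) (fun _ => b)
    simpa using this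
  have hrw : ((cube fixed g).filter fun X => (X w = b) ∧ ∀ j ∈ S, (cl j).sat X)
      = (Nset fixed g cl S).filter fun X => X w = b := by
    ext X
    simp only [Nset, Finset.filter_filter, Finset.mem_filter]
    tauto
  rw [hrw] at hind
  have hpos : 0 < (cube fixed g).card := Finset.card_pos.mpr (cube_nonempty fixed g)
  have : (2 * ((Nset fixed g cl S).filter fun X => X w = b).card) * (cube fixed g).card
      = (Nset fixed g cl S).card * (cube fixed g).card := by
    calc (2 * ((Nset fixed g cl S).filter fun X => X w = b).card) * (cube fixed g).card
        = 2 * (((Nset fixed g cl S).filter fun X => X w = b).card * (cube fixed g).card) := by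
          ring
      _ = 2 * (((cube fixed g).filter fun X => X w = b).card * (Nset fixed g cl S).card) := by
          have hQN : (cube fixed g).filter (fun X => ∀ j ∈ S, (cl j).sat X)
              = Nset fixed g cl S := by
            ext X; simp [Nset]
          rw [hind, hQN]
      _ = (2 * ((cube fixed g).filter fun X => X w = b).card) * (Nset fixed g cl S).card := by
          ring
      _ = (cube fixed g).card * (Nset fixed g cl S).card := by rw [hhalf]
      _ = (Nset fixed g cl S).card * (cube fixed g).card := by ring
  exact Nat.eq_of_mul_eq_mul_right hpos this

end SatLayer
section CoreLemma
set_option linter.unusedSectionVars false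
variable {V ι : Type} [Fintype V] [DecidableEq V] [Fintype ι] [DecidableEq ι]

/-- Peeling lemma: removing the constraints of `T` grows the count by at most
`(1-x)^{-|T|}`, provided each single constraint removes at most an `x`-fraction. -/
lemma Nset_peel (fixed : Finset V) (g : V → Bool) (cl : ι → Clause V) (x : ℝ)
    (hx1 : x ≤ 1) (S2 : Finset ι) :
    ∀ T : Finset ι, Disjoint T S2 →
      (∀ a ∈ T, ∀ W : Finset ι, S2 ⊆ W → W ⊆ S2 ∪ T → a ∉ W →
        (((Nset fixed g cl W).filter fun X => ¬ (cl a).sat X).card : ℝ)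
          ≤ x * ((Nset fixed g cl W).card : ℝ)) →
      (1 - x) ^ T.card * ((Nset fixed g cl S2).card : ℝ)
        ≤ ((Nset fixed g cl (S2 ∪ T)).card : ℝ) := by
  intro T
  induction T using Finset.induction_on with
  | empty => intro _ _; simp
  | @insert a T ha ih =>
    intro hdisj hcore
    have haS2 : a ∉ S2 := (Finset.disjoint_insert_left.mp hdisj).1
    have hTdisj : Disjoint T S2 := (Finset.disjoint_insert_left.mp hdisj).2
    have hcoreT : ∀ a' ∈ T, ∀ W : Finset ι, S2 ⊆ W → W ⊆ S2 ∪ T → a' ∉ W →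
        (((Nset fixed g cl W).filter fun X => ¬ (cl a').sat X).card : ℝ)
          ≤ x * ((Nset fixed g cl W).card : ℝ) := by
      intro a' ha' W h1 h2 h3
      exact hcore a' (Finset.mem_insert_of_mem ha') W h1
        (h2.trans (Finset.union_subset_union_right (Finset.subset_insert a T))) h3
    have ihT := ih hTdisj hcoreT
    have haW : a ∉ S2 ∪ T := by
      simp only [Finset.mem_union]
      tauto
    have hbad := hcore a (Finset.mem_insert_self a T) (S2 ∪ T) Finset.subset_union_left
      (Finset.union_subset_union_right (Finset.subset_insert a T)) haW
    have hstep : Nset fixed g cl (S2 ∪ insert a T)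
        = (Nset fixed g cl (S2 ∪ T)).filter fun X => (cl a).sat X := by
      rw [Finset.union_insert, Nset_insert]
    have hsum := Finset.card_filter_add_card_filter_not
      (s := Nset fixed g cl (S2 ∪ T)) (p := fun X => (cl a).sat X)
    have hsumR : (((Nset fixed g cl (S2 ∪ T)).filter fun X => (cl a).sat X).card : ℝ)
        + (((Nset fixed g cl (S2 ∪ T)).filter fun X => ¬ (cl a).sat X).card : ℝ)
        = ((Nset fixed g cl (S2 ∪ T)).card : ℝ) := by
      exact_mod_cast congrArg (Nat.cast : ℕ → ℝ) hsum
    have hxx : (0:ℝ) ≤ 1 - x := by linarith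
    rw [hstep, Finset.card_insert_of_notMem ha, pow_succ]
    calc (1 - x) ^ T.card * (1 - x) * ((Nset fixed g cl S2).card : ℝ)
        = (1 - x) * ((1 - x) ^ T.card * ((Nset fixed g cl S2).card : ℝ)) := by ring
      _ ≤ (1 - x) * ((Nset fixed g cl (S2 ∪ T)).card : ℝ) :=
          mul_le_mul_of_nonneg_left ihT hxx
      _ = ((Nset fixed g cl (S2 ∪ T)).card : ℝ)
          - x * ((Nset fixed g cl (S2 ∪ T)).card : ℝ) := by ring
      _ ≤ (((Nset fixed g cl (S2 ∪ T)).filter fun X => (cl a).sat X).card : ℝ) := by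
          linarith

/-- The core counting local lemma: conditioned on satisfying any set `S` of clauses,
each clause is violated with probability at most `x`. -/
lemma Nset_core (fixed : Finset V) (g : V → Bool) (cl : ι → Clause V) (x p : ℝ)
    (hx0 : 0 ≤ x) (hx1 : x ≤ 1) (D : ℕ) (hpD : p ≤ x * (1 - x) ^ D)
    (hbad : ∀ i : ι, (((cube fixed g).filter fun X => ¬ (cl i).sat X).card : ℝ)
      ≤ p * ((cube fixed g).card : ℝ))
    (hnb : ∀ i : ι, (Finset.univ.filter fun j =>
      ¬ Disjoint ((cl i).vars \ fixed) ((cl j).vars \ fixed)).card ≤ D) :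
    ∀ S : Finset ι, ∀ i : ι,
      (((Nset fixed g cl S).filter fun X => ¬ (cl i).sat X).card : ℝ)
        ≤ x * ((Nset fixed g cl S).card : ℝ) := by
  intro S
  induction S using Finset.strongInductionOn with
  | _ S ih =>
    intro i
    by_cases hiS : i ∈ S
    · have hempty : (Nset fixed g cl S).filter (fun X => ¬ (cl i).sat X) = ∅ := by
        rw [Finset.filter_eq_empty_iff]
        intro X hX
        simp only [Nset, Finset.mem_filter] at hX
        exact fun h => h (hX.2 i hiS)
      rw [hempty]
      simp only [Finset.card_empty, Nat.cast_zero]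
      positivity
    · set S1 := S.filter (fun j =>
        ¬ Disjoint ((cl i).vars \ fixed) ((cl j).vars \ fixed)) with hS1def
      set S2 := S \ S1 with hS2def
      have hS2S : S2 ⊆ S := Finset.sdiff_subset
      have hunion : S2 ∪ S1 = S := Finset.sdiff_union_of_subset (Finset.filter_subset _ _)
      have hdisjS2 : ∀ j ∈ S2, Disjoint ((cl i).vars \ fixed) ((cl j).vars \ fixed) := by
        intro j hj
        have hjS : j ∈ S := hS2S hj
        have hjn : j ∉ S1 := (Finset.mem_sdiff.mp hj).2
        by_contra hc
        exact hjn (Finset.mem_filter.mpr ⟨hjS, hc⟩)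
      -- step A: monotonicity
      have hmono : (((Nset fixed g cl S).filter fun X => ¬ (cl i).sat X).card : ℝ)
          ≤ (((Nset fixed g cl S2).filter fun X => ¬ (cl i).sat X).card : ℝ) := by
        exact_mod_cast Finset.card_le_card
          (Finset.filter_subset_filter _ (Nset_anti fixed g cl hS2S))
      -- step B/C: independence and the bad-event bound
      have hωpos : (0:ℝ) < ((cube fixed g).card : ℝ) := by
        exact_mod_cast Finset.card_pos.mpr (cube_nonempty fixed g)
      have hBC : (((Nset fixed g cl S2).filter fun X => ¬ (cl i).sat X).card : ℝ)
          ≤ p * ((Nset fixed g cl S2).card : ℝ) := by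
        have hind := Nset_bad_indep fixed g cl i S2 hdisjS2
        have hindR : (((Nset fixed g cl S2).filter fun X => ¬ (cl i).sat X).card : ℝ)
            * ((cube fixed g).card : ℝ)
            = (((cube fixed g).filter fun X => ¬ (cl i).sat X).card : ℝ)
              * ((Nset fixed g cl S2).card : ℝ) := by
          exact_mod_cast congrArg (Nat.cast : ℕ → ℝ) hind
        rw [← mul_le_mul_iff_of_pos_right hωpos]
        rw [hindR]
        calc (((cube fixed g).filter fun X => ¬ (cl i).sat X).card : ℝ)
              * ((Nset fixed g cl S2).card : ℝ)
            ≤ (p * ((cube fixed g).card : ℝ)) * ((Nset fixed g cl S2).card : ℝ) := by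
              apply mul_le_mul_of_nonneg_right (hbad i) (Nat.cast_nonneg _)
          _ = p * ((Nset fixed g cl S2).card : ℝ) * ((cube fixed g).card : ℝ) := by ring
      -- step D: peeling
      have hpeel : (1 - x) ^ S1.card * ((Nset fixed g cl S2).card : ℝ)
          ≤ ((Nset fixed g cl S).card : ℝ) := by
        have hd : Disjoint S1 S2 := Finset.disjoint_sdiff
        have := Nset_peel fixed g cl x hx1 S2 S1 hd ?_
        · rw [hunion] at this; exact this
        · intro a haS1 W hW1 hW2 haW
          have haS : a ∈ S := (Finset.filter_subset _ _) haS1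
          have hWS : W ⊆ S := by rw [← hunion]; exact hW2
          have hWS' : W ⊂ S := (Finset.ssubset_iff_of_subset hWS).mpr ⟨a, haS, haW⟩
          exact ih W hWS' a
      have hS1D : S1.card ≤ D := by
        refine le_trans (Finset.card_le_card ?_) (hnb i)
        exact Finset.filter_subset_filter _ (Finset.subset_univ S)
      have hxx : (0:ℝ) ≤ 1 - x := by linarith
      have hpow : (1 - x) ^ D ≤ (1 - x) ^ S1.card :=
        pow_le_pow_of_le_one hxx (by linarith) hS1D
      have hn2 : (0:ℝ) ≤ ((Nset fixed g cl S2).card : ℝ) := Nat.cast_nonneg _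
      calc (((Nset fixed g cl S).filter fun X => ¬ (cl i).sat X).card : ℝ)
          ≤ (((Nset fixed g cl S2).filter fun X => ¬ (cl i).sat X).card : ℝ) := hmono
        _ ≤ p * ((Nset fixed g cl S2).card : ℝ) := hBC
        _ ≤ (x * (1 - x) ^ D) * ((Nset fixed g cl S2).card : ℝ) :=
            mul_le_mul_of_nonneg_right hpD hn2
        _ ≤ (x * (1 - x) ^ S1.card) * ((Nset fixed g cl S2).card : ℝ) := by
            apply mul_le_mul_of_nonneg_right _ hn2
            exact mul_le_mul_of_nonneg_left hpow hx0
        _ = x * ((1 - x) ^ S1.card * ((Nset fixed g cl S2).card : ℝ)) := by ring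
        _ ≤ x * ((Nset fixed g cl S).card : ℝ) := mul_le_mul_of_nonneg_left hpeel hx0

end CoreLemma
section Final
set_option linter.unusedSectionVars false
variable {V ι : Type} [Fintype V] [DecidableEq V] [Fintype ι] [DecidableEq ι]

lemma condSet_eq (cl : ι → Clause V) (M : Finset V) (σ : {v // v ∈ M} → Bool)
    (v : {v // v ∈ M}) :
    condSet cl M σ v
      = Nset (M.erase v.1) (fun u => if h : u ∈ M then σ ⟨u, h⟩ else false) cl
          Finset.univ := by
  ext X
  simp only [condSet, satSet, Nset, cube, Finset.mem_filter, Finset.mem_univ, true_and]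
  constructor
  · rintro ⟨hsat, hagree⟩
    refine ⟨fun u hu => ?_, fun j _ => hsat j⟩
    obtain ⟨hne, hM⟩ := Finset.mem_erase.mp hu
    have hnev : (⟨u, hM⟩ : {v // v ∈ M}) ≠ v := fun h => hne (congrArg Subtype.val h)
    simp only [dif_pos hM]
    exact hagree ⟨u, hM⟩ hnev
  · rintro ⟨hagree, hsat⟩
    refine ⟨fun j => hsat j (by simp), fun u hu => ?_⟩
    have hne : u.1 ≠ v.1 := fun h => hu (Subtype.ext h)
    have h1 := hagree u.1 (Finset.mem_erase.mpr ⟨hne, u.2⟩)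
    rw [h1]
    simp only [dif_pos u.2]

/-- The bad-event probability bound from the `kβ` unmarked variables. -/
lemma bad_bound (cl : ι → Clause V) (M : Finset V) (kβ : ℕ)
    (hmark : ∀ i, kβ ≤ ((cl i).vars \ M).card)
    (fixed : Finset V) (hfix : fixed ⊆ M) (g : V → Bool) (i : ι) :
    (((cube fixed g).filter fun X => ¬ (cl i).sat X).card : ℝ)
      ≤ (1 / 2 ^ kβ) * ((cube fixed g).card : ℝ) := by
  set T := (cl i).vars \ M with hT
  have hTfix : Disjoint T fixed := by
    refine Finset.disjoint_left.mpr fun u hu huf => ?_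
    exact (Finset.mem_sdiff.mp hu).2 (hfix huf)
  have hforced := cube_forced fixed g T hTfix (fun u => !((cl i).sign u))
  have hsub : ((cube fixed g).filter fun X => ¬ (cl i).sat X)
      ⊆ (cube fixed g).filter fun X => ∀ u ∈ T, X u = !((cl i).sign u) := by
    intro X hX
    rw [Finset.mem_filter] at hX ⊢
    refine ⟨hX.1, fun u hu => ?_⟩
    have huv : u ∈ (cl i).vars := (Finset.mem_sdiff.mp hu).1
    have : ¬ (X u = (cl i).sign u) := fun h => hX.2 ⟨u, huv, h⟩
    cases hXu : X u <;> cases hsg : (cl i).sign u <;> simp_all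
  have hcard : (((cube fixed g).filter fun X => ¬ (cl i).sat X).card : ℝ)
      ≤ (((cube fixed g).filter fun X => ∀ u ∈ T, X u = !((cl i).sign u)).card : ℝ) := by
    exact_mod_cast Finset.card_le_card hsub
  have hfR : (2:ℝ) ^ T.card
      * (((cube fixed g).filter fun X => ∀ u ∈ T, X u = !((cl i).sign u)).card : ℝ)
      = ((cube fixed g).card : ℝ) := by
    exact_mod_cast congrArg (Nat.cast : ℕ → ℝ) hforced
  have hkT : (2:ℝ) ^ kβ ≤ (2:ℝ) ^ T.card := by
    apply pow_le_pow_right₀ one_le_two (hmark i)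
  have hp1 : (0:ℝ) < (2:ℝ) ^ kβ := by positivity
  have hp2 : (0:ℝ) < (2:ℝ) ^ T.card := by positivity
  calc (((cube fixed g).filter fun X => ¬ (cl i).sat X).card : ℝ)
      ≤ (((cube fixed g).filter fun X => ∀ u ∈ T, X u = !((cl i).sign u)).card : ℝ) := hcard
    _ = ((cube fixed g).card : ℝ) / (2:ℝ) ^ T.card := by
        rw [eq_div_iff (ne_of_gt hp2), ← hfR]; ring
    _ ≤ ((cube fixed g).card : ℝ) / (2:ℝ) ^ kβ := by
        apply div_le_div_of_nonneg_left (Nat.cast_nonneg _) hp1 hkT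
    _ = (1 / 2 ^ kβ) * ((cube fixed g).card : ℝ) := by ring

/-- Each clause's free variables meet the free variables of at most `k*d` clauses. -/
lemma neighbor_bound (cl : ι → Clause V) (k d : ℕ)
    (hk : ∀ i, (cl i).vars.card = k)
    (hdeg : ∀ v : V, (Finset.univ.filter fun i => v ∈ (cl i).vars).card ≤ d)
    (fixed : Finset V) (i : ι) :
    (Finset.univ.filter fun j =>
      ¬ Disjoint ((cl i).vars \ fixed) ((cl j).vars \ fixed)).card ≤ k * d := by
  classical
  have hsub : (Finset.univ.filter fun j =>
      ¬ Disjoint ((cl i).vars \ fixed) ((cl j).vars \ fixed))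
      ⊆ (cl i).vars.biUnion fun u => Finset.univ.filter fun j => u ∈ (cl j).vars := by
    intro j hj
    rw [Finset.mem_filter] at hj
    obtain ⟨u, hu1, hu2⟩ := Finset.not_disjoint_iff.mp hj.2
    refine Finset.mem_biUnion.mpr ⟨u, (Finset.mem_sdiff.mp hu1).1, ?_⟩
    exact Finset.mem_filter.mpr ⟨Finset.mem_univ j, (Finset.mem_sdiff.mp hu2).1⟩
  calc (Finset.univ.filter fun j =>
        ¬ Disjoint ((cl i).vars \ fixed) ((cl j).vars \ fixed)).card
      ≤ ((cl i).vars.biUnion fun u =>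
          Finset.univ.filter fun j => u ∈ (cl j).vars).card := Finset.card_le_card hsub
    _ ≤ ∑ u ∈ (cl i).vars, (Finset.univ.filter fun j => u ∈ (cl j).vars).card :=
        Finset.card_biUnion_le
    _ ≤ ∑ _u ∈ (cl i).vars, d := Finset.sum_le_sum fun u _ => hdeg u
    _ = k * d := by rw [Finset.sum_const, hk i, smul_eq_mul]

end Final

set_option maxHeartbeats 2000000 in
/-- Suppose `2^{k_β} ≥ 2eds` for some `s ≥ k`.  Then for every marked
variable `v ∈ M`, every assignment of the other marked variables (represented by a full
assignment `σ` of `M`, whose value at `v` is irrelevant to `margin`), and every value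
`b ∈ {0,1}`, the conditional marginal satisfies `μ_v(b | σ(M\{v})) ≤ (1/2)·exp(1/s)`. -/
theorem stmt_15 {V ι : Type} [Fintype V] [DecidableEq V] [Fintype ι]
    (cl : ι → Clause V) (k d kα kβ : ℕ)
    (hk : ∀ i, (cl i).vars.card = k)
    (hdeg : ∀ v : V, (Finset.univ.filter fun i => v ∈ (cl i).vars).card ≤ d)
    (M : Finset V)
    (hmark : ∀ i, kα ≤ ((cl i).vars ∩ M).card ∧ kβ ≤ ((cl i).vars \ M).card)
    (s : ℝ) (hs : (k : ℝ) ≤ s)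
    (hcond : 2 * Real.exp 1 * d * s ≤ (2 : ℝ) ^ kβ) :
    ∀ (v : {v // v ∈ M}) (σ : {v // v ∈ M} → Bool) (b : Bool),
      margin cl M σ v b ≤ (1 / 2) * Real.exp (1 / s) := by
  classical
  intro v σ b
  set fixed := M.erase v.1 with hfixdef
  set g : V → Bool := fun u => if h : u ∈ M then σ ⟨u, h⟩ else false with hgdef
  have hcs : condSet cl M σ v = Nset fixed g cl Finset.univ := condSet_eq cl M σ v
  simp only [margin, hcs]
  by_cases hn : (Nset fixed g cl (Finset.univ : Finset ι)).card = 0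
  · rw [hn]
    simp only [Nat.cast_zero, div_zero]
    positivity
  have hnpos : 0 < (Nset fixed g cl (Finset.univ : Finset ι)).card := Nat.pos_of_ne_zero hn
  have hnposR : (0:ℝ) < ((Nset fixed g cl (Finset.univ : Finset ι)).card : ℝ) := by
    exact_mod_cast hnpos
  have hvfree : v.1 ∉ fixed := Finset.notMem_erase _ _
  have hsnn : (0:ℝ) ≤ s := le_trans (Nat.cast_nonneg k) hs
  have hs0 : (0:ℝ) ≤ 1/s := by positivity
  have hexp1 : (1:ℝ) ≤ Real.exp (1/s) := Real.one_le_exp hs0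
  rcases isEmpty_or_nonempty ι with hι | hι
  · -- no clauses at all: the marginal is exactly 1/2
    have h2 := Nset_var_indep fixed g cl v.1 hvfree b Finset.univ (fun j _ => (hι.elim j))
    have h2R : 2 * (((Nset fixed g cl Finset.univ).filter fun X => X v.1 = b).card : ℝ)
        = ((Nset fixed g cl Finset.univ).card : ℝ) := by
      exact_mod_cast congrArg (Nat.cast : ℕ → ℝ) h2
    rw [div_le_iff₀ hnposR]
    nlinarith [h2R, mul_nonneg (sub_nonneg.mpr hexp1) hnposR.le]
  -- main case: there is at least one clause
  obtain ⟨i0⟩ := hι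
  obtain ⟨X0, hX0⟩ := Finset.card_pos.mp hnpos
  have hsat0 : ∀ j, (cl j).sat X0 := by
    simp only [Nset, Finset.mem_filter] at hX0
    exact fun j => hX0.2 j (Finset.mem_univ j)
  obtain ⟨u0, hu0v, _⟩ := hsat0 i0
  have hk1 : 1 ≤ k := by
    rw [← hk i0]
    exact Finset.card_pos.mpr ⟨u0, hu0v⟩
  have hd1 : 1 ≤ d := by
    refine le_trans ?_ (hdeg u0)
    exact Finset.card_pos.mpr ⟨i0, Finset.mem_filter.mpr ⟨Finset.mem_univ i0, hu0v⟩⟩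
  have hs1 : (1:ℝ) ≤ s := le_trans (by exact_mod_cast hk1) hs
  have hd1R : (1:ℝ) ≤ (d:ℝ) := by exact_mod_cast hd1
  have hksR : (k:ℝ) ≤ s := hs
  have hE : (2:ℝ) < Real.exp 1 := lt_trans (by norm_num) Real.exp_one_gt_d9
  have hspos : (0:ℝ) < s := lt_of_lt_of_le one_pos hs1
  have h2kβpos : (0:ℝ) < 2 ^ kβ := by positivity
  set x : ℝ := 2 / 2 ^ kβ with hxdef
  set p : ℝ := 1 / 2 ^ kβ with hpdef
  have hx0 : (0:ℝ) < x := by positivity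
  have hdposR : (0:ℝ) < (d:ℝ) := lt_of_lt_of_le one_pos hd1R
  have hEdspos : (0:ℝ) < Real.exp 1 * d * s :=
    mul_pos (mul_pos (Real.exp_pos 1) hdposR) hspos
  have hx_prod : x * (Real.exp 1 * (d:ℝ) * s) ≤ 1 := by
    rw [hxdef, div_mul_eq_mul_div, div_le_one h2kβpos]
    nlinarith [hcond]
  have hEds2 : (2:ℝ) ≤ Real.exp 1 * d * s := by
    have h1 : Real.exp 1 ≤ Real.exp 1 * d := by
      nlinarith [mul_nonneg (Real.exp_pos 1).le (sub_nonneg.mpr hd1R)]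
    have h2 : Real.exp 1 * d ≤ Real.exp 1 * d * s := by
      nlinarith [mul_nonneg (mul_pos (Real.exp_pos 1) hdposR).le (sub_nonneg.mpr hs1)]
    linarith
  have hxhalf : x ≤ 1/2 := by
    nlinarith [mul_le_mul_of_nonneg_left hEds2 hx0.le, hx_prod]
  have hx1 : x ≤ 1 := by linarith
  have hxx : (0:ℝ) ≤ 1 - x := by linarith
  -- (★1)  p ≤ x (1-x)^(k d)
  have hkdx : ((k*d : ℕ):ℝ) * x ≤ 1/2 := by
    push_cast
    have hdx0 : (0:ℝ) ≤ (d:ℝ) * x := by positivity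
    have h2k : 2 * (k:ℝ) ≤ Real.exp 1 * s := by
      nlinarith [mul_nonneg hsnn (sub_nonneg.mpr hE.le), hksR]
    nlinarith [mul_le_mul_of_nonneg_right h2k hdx0, hx_prod]
  have hpD : p ≤ x * (1-x) ^ (k*d) := by
    have hb := one_add_mul_le_pow (a := -x) (by linarith) (k*d)
    have hb2 : 1 - ((k*d:ℕ):ℝ) * x ≤ (1-x)^(k*d) := by
      rw [show (1:ℝ) - x = 1 + -x by ring]
      linarith [hb]
    have hhalf : (1:ℝ)/2 ≤ (1-x)^(k*d) := by linarith [hb2, hkdx]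
    have hpx : p = x / 2 := by rw [hpdef, hxdef]; ring
    rw [hpx]
    nlinarith [mul_le_mul_of_nonneg_left hhalf hx0.le]
  -- (★2)  exp(-1/s) ≤ (1-x)^d
  have hEspos : (0:ℝ) < Real.exp 1 * s := mul_pos (Real.exp_pos 1) hspos
  have hdx : (d:ℝ) * x ≤ 1 / (Real.exp 1 * s) := by
    rw [le_div_iff₀ hEspos]
    nlinarith [hx_prod]
  have hexp2 : Real.exp (-(1/s)) ≤ (1-x) ^ d := by
    have h1 : (1:ℝ)/s + 1 ≤ Real.exp (1/s) := Real.add_one_le_exp _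
    have h1pos : (0:ℝ) < 1 + 1/s := by positivity
    have hq1 : Real.exp (-(1/s)) ≤ (1 + 1/s)⁻¹ := by
      rw [Real.exp_neg]
      apply inv_anti₀ h1pos
      linarith
    have hq2 : (1 + 1/s)⁻¹ ≤ 1 - 1/(Real.exp 1 * s) := by
      have hEs1 : s + 1 ≤ Real.exp 1 * s := by
        nlinarith [mul_nonneg hsnn (sub_nonneg.mpr hE.le)]
      have h1s : (1 + 1/s) = (s+1)/s := by
        field_simp
      have ha : (0:ℝ) < 1/(Real.exp 1 * s) := by positivity
      have hc : (1/(Real.exp 1 * s)) * (Real.exp 1 * s) = 1 := by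
        field_simp
      have hd' : (1/(Real.exp 1 * s)) * (s+1) ≤ (1/(Real.exp 1 * s)) * (Real.exp 1 * s) :=
        mul_le_mul_of_nonneg_left hEs1 ha.le
      rw [h1s, inv_div, div_le_iff₀ (by positivity : (0:ℝ) < s + 1)]
      nlinarith [hd', hc]
    have hq3 : 1 - 1/(Real.exp 1 * s) ≤ 1 - (d:ℝ) * x := by linarith
    have hb := one_add_mul_le_pow (a := -x) (by linarith) d
    have hb' : 1 - (d:ℝ) * x ≤ (1-x)^d := by
      rw [show (1:ℝ) - x = 1 + -x by ring]
      linarith [hb]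
    linarith
  -- apply the core lemma
  have hbad : ∀ i : ι, (((cube fixed g).filter fun X => ¬ (cl i).sat X).card : ℝ)
      ≤ p * ((cube fixed g).card : ℝ) :=
    fun i => bad_bound cl M kβ (fun i => (hmark i).2) fixed (Finset.erase_subset _ _) g i
  have hnb := fun i => neighbor_bound cl k d hk hdeg fixed i
  have hcore := Nset_core fixed g cl x p hx0.le hx1 (k*d) hpD hbad hnb
  -- final assembly
  set S1 : Finset ι := Finset.univ.filter (fun j => v.1 ∈ (cl j).vars) with hS1def
  set S2 : Finset ι := Finset.univ \ S1 with hS2def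
  have hunion : S2 ∪ S1 = Finset.univ :=
    Finset.sdiff_union_of_subset (Finset.filter_subset _ _)
  have ha2 := Nset_var_indep fixed g cl v.1 hvfree b S2 (fun j hj => by
    have := (Finset.mem_sdiff.mp hj).2
    intro hc
    exact this (Finset.mem_filter.mpr ⟨Finset.mem_univ j, hc⟩))
  have ha2R : 2 * (((Nset fixed g cl S2).filter fun X => X v.1 = b).card : ℝ)
      = ((Nset fixed g cl S2).card : ℝ) := by
    exact_mod_cast congrArg (Nat.cast : ℕ → ℝ) ha2
  have hpeel0 := Nset_peel fixed g cl x hx1 S2 S1 Finset.disjoint_sdiff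
    (fun a _ W _ _ _ => hcore W a)
  rw [hunion] at hpeel0
  have hS1d : S1.card ≤ d := hdeg v.1
  have hpow : (1-x)^d ≤ (1-x)^S1.card := pow_le_pow_of_le_one hxx (by linarith) hS1d
  have hmono : (((Nset fixed g cl Finset.univ).filter fun X => X v.1 = b).card : ℝ)
      ≤ (((Nset fixed g cl S2).filter fun X => X v.1 = b).card : ℝ) := by
    exact_mod_cast Finset.card_le_card
      (Finset.filter_subset_filter _ (Nset_anti fixed g cl (Finset.subset_univ S2)))
  have hn2nn : (0:ℝ) ≤ ((Nset fixed g cl S2).card : ℝ) := Nat.cast_nonneg _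
  have hchain : Real.exp (-(1/s)) * ((Nset fixed g cl S2).card : ℝ)
      ≤ ((Nset fixed g cl Finset.univ).card : ℝ) := by
    calc Real.exp (-(1/s)) * ((Nset fixed g cl S2).card : ℝ)
        ≤ (1-x)^d * ((Nset fixed g cl S2).card : ℝ) :=
          mul_le_mul_of_nonneg_right hexp2 hn2nn
      _ ≤ (1-x)^S1.card * ((Nset fixed g cl S2).card : ℝ) :=
          mul_le_mul_of_nonneg_right hpow hn2nn
      _ ≤ ((Nset fixed g cl Finset.univ).card : ℝ) := hpeel0
  have hn2exp : ((Nset fixed g cl S2).card : ℝ)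
      ≤ Real.exp (1/s) * ((Nset fixed g cl Finset.univ).card : ℝ) := by
    have hexppos : (0:ℝ) < Real.exp (1/s) := Real.exp_pos _
    have := mul_le_mul_of_nonneg_left hchain hexppos.le
    rw [← mul_assoc, ← Real.exp_add] at this
    simpa using this
  rw [div_le_iff₀ hnposR]
  calc (((Nset fixed g cl Finset.univ).filter fun X => X v.1 = b).card : ℝ)
      ≤ (((Nset fixed g cl S2).filter fun X => X v.1 = b).card : ℝ) := hmono
    _ = ((Nset fixed g cl S2).card : ℝ) / 2 := by linarith [ha2R]
    _ ≤ Real.exp (1/s) * ((Nset fixed g cl Finset.univ).card : ℝ) / 2 := by linarith [hn2exp]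
    _ = 1/2 * Real.exp (1/s) * ((Nset fixed g cl Finset.univ).card : ℝ) := by ring
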